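/- Let N ≥ 1 and n ≥ 1 be integers, let R_1, …, R_n and S be N × N Hermitian positive semidefinite complex matrices, and let σ > 0 be a real number. Then there exists a unique vector (e_1, …, e_n) ∈ ℝ^n with e_i ≥ 0 for all i satisfying the coupled fixed-point equations e_i = (1/N) · tr( R_i · ( (1/N) Σ_{j=1}^n R_j / (1 + e_j) + S + σ·I_N )^{−1} ) for all i ∈ {1, …, n}; here the matrix being inverted is Hermitian positive definite, so the inverse exists and each trace is a nonnegative real number. -/

import Mathlib

open Matrix
open scoped ComplexOrder

section helpers
set_option linter.unusedSectionVars false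
variable {m : Type*} [Fintype m] [DecidableEq m]

private lemma rsmul_eq (c : ℝ) (A : Matrix m m ℂ) : c • A = (c : ℂ) • A := by
  ext i j; simp [Complex.real_smul]

private lemma psd_smul {A : Matrix m m ℂ} (hA : A.PosSemidef) {c : ℝ} (hc : 0 ≤ c) :
    (c • A).PosSemidef := by
  rw [rsmul_eq]
  refine Matrix.PosSemidef.of_dotProduct_mulVec_nonneg ?_ fun x => ?_
  · show _ = _
    rw [conjTranspose_smul, Complex.star_def, Complex.conj_ofReal, hA.1]
  · rw [smul_mulVec, dotProduct_smul, smul_eq_mul]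
    exact mul_nonneg (Complex.zero_le_real.mpr hc) (hA.dotProduct_mulVec_nonneg x)

private lemma pd_smul {A : Matrix m m ℂ} (hA : A.PosDef) {c : ℝ} (hc : 0 < c) :
    (c • A).PosDef := by
  rw [rsmul_eq]
  refine Matrix.PosDef.of_dotProduct_mulVec_pos ?_ fun x hx => ?_
  · show _ = _
    rw [conjTranspose_smul, Complex.star_def, Complex.conj_ofReal, hA.1]
  · rw [smul_mulVec, dotProduct_smul, smul_eq_mul]
    exact mul_pos (Complex.zero_lt_real.mpr hc) (hA.dotProduct_mulVec_pos hx)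

private lemma psd_trace_nonneg {A : Matrix m m ℂ} (hA : A.PosSemidef) : 0 ≤ A.trace := by
  rw [Matrix.trace]
  refine Finset.sum_nonneg fun i _ => ?_
  have h := hA.dotProduct_mulVec_nonneg (Pi.single i 1)
  simpa [dotProduct, Matrix.mulVec, Pi.single_apply, Finset.sum_ite_eq,
    Matrix.diag] using h

open scoped MatrixOrder in
private lemma trace_mul_nonneg {A B : Matrix m m ℂ} (hA : A.PosSemidef) (hB : B.PosSemidef) :
    0 ≤ (A * B).trace := by
  have hA0 : 0 ≤ A := Matrix.nonneg_iff_posSemidef.mpr hA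
  have h2 : (CFC.sqrt A * B * CFC.sqrt A).PosSemidef := by
    have := hB.mul_mul_conjTranspose_same (CFC.sqrt A)
    rwa [(Matrix.nonneg_iff_posSemidef.mp (CFC.sqrt_nonneg A)).isHermitian.eq] at this
  have h3 : (A * B).trace = (CFC.sqrt A * B * CFC.sqrt A).trace := by
    conv_lhs => rw [← CFC.sqrt_mul_sqrt_self A hA0]
    rw [Matrix.mul_assoc, Matrix.trace_mul_comm, Matrix.mul_assoc]
  rw [h3]; exact psd_trace_nonneg h2

private lemma herm_swap {M : Matrix m m ℂ} (hM : M.IsHermitian) (u v : m → ℂ) :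
    star (M *ᵥ u) ⬝ᵥ v = star u ⬝ᵥ (M *ᵥ v) := by
  rw [Matrix.star_mulVec, Matrix.dotProduct_mulVec, hM.eq]

private lemma inv_sub_inv_psd {A B : Matrix m m ℂ} (hA : A.PosDef) (hB : B.PosDef)
    (hAB : (B - A).PosSemidef) : (A⁻¹ - B⁻¹).PosSemidef := by
  refine Matrix.PosSemidef.of_dotProduct_mulVec_nonneg
    (hA.inv.isHermitian.sub hB.inv.isHermitian) fun x => ?_
  set a := A⁻¹ *ᵥ x with ha
  set y := B⁻¹ *ᵥ x with hy
  have fA : A *ᵥ a = x := by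
    rw [ha, mulVec_mulVec,
      Matrix.mul_nonsing_inv _ ((Matrix.isUnit_iff_isUnit_det _).mp hA.isUnit), one_mulVec]
  have fB : B *ᵥ y = x := by
    rw [hy, mulVec_mulVec,
      Matrix.mul_nonsing_inv _ ((Matrix.isUnit_iff_isUnit_det _).mp hB.isUnit), one_mulVec]
  have hxa : star a ⬝ᵥ x = star x ⬝ᵥ a := by
    conv_lhs => rw [← fA]
    rw [← herm_swap hA.isHermitian a a, fA]
  have hxA : star a ⬝ᵥ (A *ᵥ y) = star x ⬝ᵥ y := by
    rw [← herm_swap hA.isHermitian a y, fA]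
  have key : star x ⬝ᵥ ((A⁻¹ - B⁻¹) *ᵥ x)
      = star (y - a) ⬝ᵥ (A *ᵥ (y - a)) + star y ⬝ᵥ ((B - A) *ᵥ y) := by
    simp only [sub_mulVec, mulVec_sub, star_sub, sub_dotProduct, dotProduct_sub, fA, fB,
      hxA, hxa, ← ha, ← hy]
    ring
  rw [key]
  exact add_nonneg (hA.posSemidef.dotProduct_mulVec_nonneg _) (hAB.dotProduct_mulVec_nonneg _)

private lemma smul_matrix_inv (c : ℝ) (hc : c ≠ 0) {A : Matrix m m ℂ} (hA : IsUnit A.det) :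
    (c • A)⁻¹ = c⁻¹ • A⁻¹ := by
  apply Matrix.inv_eq_right_inv
  rw [smul_mul_assoc, mul_smul_comm, Matrix.mul_nonsing_inv _ hA, smul_smul,
    mul_inv_cancel₀ hc, one_smul]

end helpers

/-- The matrix appearing in the deterministic-equivalent fixed-point equations:
`(1/N) ∑_j R_j/(1 + e_j) + S + σ I`. -/
noncomputable def fpMatrix {N n : ℕ} (R : Fin n → Matrix (Fin N) (Fin N) ℂ)
    (S : Matrix (Fin N) (Fin N) ℂ) (σ : ℝ) (e : Fin n → ℝ) :
    Matrix (Fin N) (Fin N) ℂ :=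
  ((N : ℝ)⁻¹ • ∑ j, (1 + e j)⁻¹ • R j) + S + σ • 1

section main
set_option linter.unusedSectionVars false
variable {N n : ℕ} (R : Fin n → Matrix (Fin N) (Fin N) ℂ) (hR : ∀ i, (R i).PosSemidef)
  (S : Matrix (Fin N) (Fin N) ℂ) (hS : S.PosSemidef) (σ : ℝ) (hσ : 0 < σ)

private lemma psd_sum' {f : Fin n → Matrix (Fin N) (Fin N) ℂ}
    (h : ∀ j, (f j).PosSemidef) : (∑ j, f j).PosSemidef :=
  Finset.sum_induction f _ (fun _ _ ha hb => ha.add hb) Matrix.PosSemidef.zero (fun j _ => h j)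

private lemma one_add_pos (e : Fin n → ℝ) (he : ∀ i, 0 ≤ e i) (j : Fin n) : (0:ℝ) < 1 + e j := by
  have := he j; linarith

include hR hS hσ in
private lemma fpm_posdef (e : Fin n → ℝ) (he : ∀ i, 0 ≤ e i) : (fpMatrix R S σ e).PosDef := by
  unfold fpMatrix
  have h1 : (((N : ℝ)⁻¹ • ∑ j, (1 + e j)⁻¹ • R j) + S).PosSemidef := by
    refine (psd_smul (psd_sum' fun j => psd_smul (hR j) ?_) (by positivity)).add hS
    exact (inv_pos.mpr (one_add_pos e he j)).le
  exact Matrix.PosDef.posSemidef_add h1 (pd_smul Matrix.PosDef.one hσ)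

include hR hS hσ in
private lemma fpm_sub_psd (e e' : Fin n → ℝ) (he' : ∀ i, 0 ≤ e' i) (α : ℝ) (hα : 1 ≤ α)
    (hcoef : ∀ j, α⁻¹ * (1 + e' j)⁻¹ ≤ (1 + e j)⁻¹) :
    (fpMatrix R S σ e - α⁻¹ • fpMatrix R S σ e').PosSemidef := by
  have hα0 : (0:ℝ) < α := lt_of_lt_of_le one_pos hα
  have hdecomp : fpMatrix R S σ e - α⁻¹ • fpMatrix R S σ e'
      = ((N : ℝ)⁻¹ • ∑ j, ((1 + e j)⁻¹ - α⁻¹ * (1 + e' j)⁻¹) • R j)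
        + ((1 - α⁻¹) • S + ((1 - α⁻¹) * σ) • (1 : Matrix (Fin N) (Fin N) ℂ)) := by
    unfold fpMatrix
    have h1 : (N : ℝ)⁻¹ • ∑ j, (1 + e j)⁻¹ • R j
        - α⁻¹ • ((N : ℝ)⁻¹ • ∑ j, (1 + e' j)⁻¹ • R j)
        = (N : ℝ)⁻¹ • ∑ j, ((1 + e j)⁻¹ - α⁻¹ * (1 + e' j)⁻¹) • R j := by
      rw [smul_comm (α⁻¹) ((N:ℝ)⁻¹), ← smul_sub]
      congr 1
      rw [Finset.smul_sum, ← Finset.sum_sub_distrib]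
      refine Finset.sum_congr rfl fun j _ => ?_
      rw [smul_smul, ← sub_smul]
    have h2 : (1 - α⁻¹) • S = S - α⁻¹ • S := by rw [sub_smul, one_smul]
    have h3 : ((1 - α⁻¹) * σ) • (1 : Matrix (Fin N) (Fin N) ℂ)
        = σ • 1 - α⁻¹ • (σ • (1 : Matrix (Fin N) (Fin N) ℂ)) := by
      rw [smul_smul, ← sub_smul, sub_mul, one_mul]
    rw [h2, h3, ← h1]
    simp only [smul_add]
    abel
  rw [hdecomp]
  have hα1 : (0:ℝ) ≤ 1 - α⁻¹ := by
    have : α⁻¹ ≤ 1 := by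
      rw [inv_le_one_iff₀]; right; exact hα
    linarith
  refine (psd_smul (psd_sum' fun j => psd_smul (hR j) ?_) (by positivity)).add
    ((psd_smul hS hα1).add (psd_smul Matrix.PosSemidef.one (mul_nonneg hα1 hσ.le)))
  have := hcoef j
  have h0 : (0:ℝ) ≤ α⁻¹ * (1 + e' j)⁻¹ :=
    mul_nonneg (inv_nonneg.mpr hα0.le) (inv_nonneg.mpr (one_add_pos e' he' j).le)
  linarith

include hR hS hσ in
private lemma key_trace (e e' : Fin n → ℝ) (he : ∀ i, 0 ≤ e i) (he' : ∀ i, 0 ≤ e' i)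
    (α : ℝ) (hα : 1 ≤ α) (hcoef : ∀ j, α⁻¹ * (1 + e' j)⁻¹ ≤ (1 + e j)⁻¹) (i : Fin n) :
    ((R i * (fpMatrix R S σ e)⁻¹).trace).re
      ≤ α * ((R i * (fpMatrix R S σ e')⁻¹).trace).re := by
  have hα0 : (0:ℝ) < α := lt_of_lt_of_le one_pos hα
  have hBpd := fpm_posdef R hR S hS σ hσ e he
  have hB'pd := fpm_posdef R hR S hS σ hσ e' he'
  have hApd : (α⁻¹ • fpMatrix R S σ e').PosDef := pd_smul hB'pd (by positivity)
  have hdiff := fpm_sub_psd R hR S hS σ hσ e e' he' α hα hcoef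
  have hinv := inv_sub_inv_psd hApd hBpd hdiff
  have hAinv : (α⁻¹ • fpMatrix R S σ e')⁻¹ = α • (fpMatrix R S σ e')⁻¹ := by
    rw [smul_matrix_inv α⁻¹ (by positivity)
      ((Matrix.isUnit_iff_isUnit_det _).mp hB'pd.isUnit), inv_inv]
  rw [hAinv] at hinv
  have htr := trace_mul_nonneg (hR i) hinv
  rw [Matrix.mul_sub, Matrix.trace_sub, sub_nonneg] at htr
  have hre := (Complex.le_def.mp htr).1
  rw [mul_smul_comm, Matrix.trace_smul, Complex.real_smul] at hre
  simpa [Complex.re_ofReal_mul] using hre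

include hR hS hσ in
private lemma bound_trace (e : Fin n → ℝ) (he : ∀ i, 0 ≤ e i) (i : Fin n) :
    ((R i * (fpMatrix R S σ e)⁻¹).trace).re ≤ σ⁻¹ * ((R i).trace).re := by
  have hBpd := fpm_posdef R hR S hS σ hσ e he
  have hApd : (σ • (1 : Matrix (Fin N) (Fin N) ℂ)).PosDef := pd_smul Matrix.PosDef.one hσ
  have hdiff : (fpMatrix R S σ e - σ • (1 : Matrix (Fin N) (Fin N) ℂ)).PosSemidef := by
    have h : fpMatrix R S σ e - σ • (1 : Matrix (Fin N) (Fin N) ℂ)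
        = ((N : ℝ)⁻¹ • ∑ j, (1 + e j)⁻¹ • R j) + S := by
      unfold fpMatrix; abel
    rw [h]
    exact (psd_smul (psd_sum' fun j => psd_smul (hR j)
      (inv_pos.mpr (one_add_pos e he j)).le) (by positivity)).add hS
  have hinv := inv_sub_inv_psd hApd hBpd hdiff
  have hAinv : (σ • (1 : Matrix (Fin N) (Fin N) ℂ))⁻¹
      = σ⁻¹ • (1 : Matrix (Fin N) (Fin N) ℂ) := by
    rw [smul_matrix_inv σ hσ.ne' (by simp), inv_one]
  rw [hAinv] at hinv
  have htr := trace_mul_nonneg (hR i) hinv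
  rw [Matrix.mul_sub, Matrix.trace_sub, sub_nonneg] at htr
  have hre := (Complex.le_def.mp htr).1
  rw [mul_smul_comm, Matrix.mul_one, Matrix.trace_smul, Complex.real_smul] at hre
  simpa [Complex.re_ofReal_mul] using hre

end main

/-- Existence and uniqueness of the nonnegative solution of the coupled fixed-point
equations `e_i = (1/N) tr(R_i ((1/N) ∑_j R_j/(1+e_j) + S + σ I)⁻¹)`; moreover, for any
nonnegative `e` the matrix being inverted is Hermitian positive definite and each trace
is a nonnegative real number. -/
theorem fixed_point_equations_unique_solution
    (N n : ℕ) (hN : 1 ≤ N) (hn : 1 ≤ n)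
    (R : Fin n → Matrix (Fin N) (Fin N) ℂ) (hR : ∀ i, (R i).PosSemidef)
    (S : Matrix (Fin N) (Fin N) ℂ) (hS : S.PosSemidef)
    (σ : ℝ) (hσ : 0 < σ) :
    (∀ e : Fin n → ℝ, (∀ i, 0 ≤ e i) →
      (fpMatrix R S σ e).PosDef ∧
      ∀ i, 0 ≤ ((R i * (fpMatrix R S σ e)⁻¹).trace).re ∧
        ((R i * (fpMatrix R S σ e)⁻¹).trace).im = 0) ∧
    (∃! e : Fin n → ℝ, (∀ i, 0 ≤ e i) ∧
      ∀ i, e i = (N : ℝ)⁻¹ * ((R i * (fpMatrix R S σ e)⁻¹).trace).re) := by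
  haveI : Nonempty (Fin n) := Fin.pos_iff_nonempty.mp hn
  refine ⟨fun e he => ⟨fpm_posdef R hR S hS σ hσ e he, fun i => ?_⟩, ?_⟩
  · have h := trace_mul_nonneg (hR i) (fpm_posdef R hR S hS σ hσ e he).inv.posSemidef
    have h2 := Complex.nonneg_iff.mp h
    exact ⟨h2.1, h2.2.symm⟩
  set f : (Fin n → ℝ) → Fin n → ℝ :=
    fun e i => (N : ℝ)⁻¹ * ((R i * (fpMatrix R S σ e)⁻¹).trace).re with hf
  have hNinv : (0:ℝ) ≤ (N:ℝ)⁻¹ := by positivity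
  have f_nonneg : ∀ e : Fin n → ℝ, (∀ i, 0 ≤ e i) → ∀ i, 0 ≤ f e i := fun e he i =>
    mul_nonneg hNinv (Complex.nonneg_iff.mp (trace_mul_nonneg (hR i)
      (fpm_posdef R hR S hS σ hσ e he).inv.posSemidef)).1
  set B₀ : ℝ := (N:ℝ)⁻¹ * (σ⁻¹ * ∑ k, ((R k).trace).re) with hB₀def
  have htrRk : ∀ k, 0 ≤ ((R k).trace).re := fun k =>
    (Complex.nonneg_iff.mp (psd_trace_nonneg (hR k))).1
  have hB₀ : (0:ℝ) ≤ B₀ :=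
    mul_nonneg hNinv (mul_nonneg (inv_nonneg.mpr hσ.le)
      (Finset.sum_nonneg fun k _ => htrRk k))
  have f_bound : ∀ e : Fin n → ℝ, (∀ i, 0 ≤ e i) → ∀ i, f e i ≤ B₀ := by
    intro e he i
    refine mul_le_mul_of_nonneg_left ?_ hNinv
    refine (bound_trace R hR S hS σ hσ e he i).trans ?_
    exact mul_le_mul_of_nonneg_left
      (Finset.single_le_sum (fun k _ => htrRk k) (Finset.mem_univ i))
      (inv_nonneg.mpr hσ.le)
  have f_mono : ∀ e e' : Fin n → ℝ, (∀ i, 0 ≤ e i) → (∀ i, 0 ≤ e' i) →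
      (∀ i, e i ≤ e' i) → ∀ i, f e i ≤ f e' i := by
    intro e e' he he' hle i
    have hkey := key_trace R hR S hS σ hσ e e' he he' 1 le_rfl (fun j => by
      rw [inv_one, one_mul]
      exact inv_anti₀ (one_add_pos e he j) (by linarith [hle j])) i
    rw [one_mul] at hkey
    exact mul_le_mul_of_nonneg_left hkey hNinv
  -- uniqueness helper
  have le_of_fix : ∀ e e' : Fin n → ℝ, (∀ i, 0 ≤ e i) → (∀ i, 0 ≤ e' i) →
      (∀ i, e i = f e i) → (∀ i, e' i = f e' i) → ∀ i, e i ≤ e' i := by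
    intro e e' he he' hfe hfe'
    obtain ⟨i0, -, hmax⟩ := Finset.exists_max_image Finset.univ
      (fun j => (1 + e j) / (1 + e' j)) Finset.univ_nonempty
    set α := (1 + e i0) / (1 + e' i0) with hαdef
    have hpos : ∀ j, (0:ℝ) < 1 + e j := one_add_pos e he
    have hpos' : ∀ j, (0:ℝ) < 1 + e' j := one_add_pos e' he'
    have hα1 : α ≤ 1 := by
      by_contra hc
      push_neg at hc
      have hcoef : ∀ j, α⁻¹ * (1 + e' j)⁻¹ ≤ (1 + e j)⁻¹ := by
        intro j
        have hj := hmax j (Finset.mem_univ j)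
        rw [div_le_iff₀ (hpos' j)] at hj
        rw [← mul_inv]
        exact inv_anti₀ (hpos j) hj
      have hkey := key_trace R hR S hS σ hσ e e' he he' α hc.le hcoef i0
      have h1 : e i0 ≤ α * e' i0 := by
        rw [hfe i0, hfe' i0]
        calc (N:ℝ)⁻¹ * ((R i0 * (fpMatrix R S σ e)⁻¹).trace).re
            ≤ (N:ℝ)⁻¹ * (α * ((R i0 * (fpMatrix R S σ e')⁻¹).trace).re) :=
              mul_le_mul_of_nonneg_left hkey hNinv
          _ = α * ((N:ℝ)⁻¹ * ((R i0 * (fpMatrix R S σ e')⁻¹).trace).re) := by ring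
      have h2 : α * (1 + e' i0) = 1 + e i0 := by
        rw [hαdef, div_mul_cancel₀ _ (hpos' i0).ne']
      nlinarith [hpos' i0]
    intro i
    have hi := hmax i (Finset.mem_univ i)
    have := (div_le_one (hpos' i)).mp (le_trans hi hα1)
    linarith
  -- existence via Knaster–Tarski on the complete lattice (Fin n → Icc 0 B₀)
  haveI : Fact ((0:ℝ) ≤ B₀) := ⟨hB₀⟩
  have hmemF : ∀ (v : Fin n → Set.Icc (0:ℝ) B₀) (i : Fin n),
      f (fun j => (v j : ℝ)) i ∈ Set.Icc (0:ℝ) B₀ := by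
    intro v i
    have hv : ∀ j, 0 ≤ ((v j : ℝ)) := fun j => (v j).2.1
    exact ⟨f_nonneg _ hv i, f_bound _ hv i⟩
  let F : (Fin n → Set.Icc (0:ℝ) B₀) →o (Fin n → Set.Icc (0:ℝ) B₀) :=
    { toFun := fun v i => ⟨f (fun j => (v j : ℝ)) i, hmemF v i⟩
      monotone' := by
        intro v w hvw i
        have hv : ∀ j, 0 ≤ ((v j : ℝ)) := fun j => (v j).2.1
        have hw : ∀ j, 0 ≤ ((w j : ℝ)) := fun j => (w j).2.1
        have hle : ∀ j, ((v j : ℝ)) ≤ (w j : ℝ) := fun j => Subtype.coe_le_coe.mpr (hvw j)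
        exact Subtype.mk_le_mk.mpr (f_mono _ _ hv hw hle i) }
  obtain ⟨v, hv⟩ : ∃ v : Fin n → Set.Icc (0:ℝ) B₀, F v = v := ⟨F.lfp, F.map_lfp⟩
  set e₀ : Fin n → ℝ := fun i => (v i : ℝ) with he₀def
  have he₀ : ∀ i, 0 ≤ e₀ i := fun i => (v i).2.1
  have hfix : ∀ i, e₀ i = f e₀ i := by
    intro i
    have h := congrFun hv i
    exact (congrArg Subtype.val h).symm
  refine ⟨e₀, ⟨he₀, hfix⟩, ?_⟩
  rintro e' ⟨he', hfix'⟩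
  funext i
  exact le_antisymm (le_of_fix e' e₀ he' he₀ hfix' hfix i)
    (le_of_fix e₀ e' he₀ he' hfix hfix' i)
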